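/- Let ε > 0 and δ₀, δ₁, δ ∈ [0,1) satisfy exp(ε)·(1−δ₀) ≥ 1−δ₁, exp(ε)·(1−δ₁) ≥ 1−δ₀, δ₀ ≤ δ, and δ₁ ≤ δ. Then there exists a function T'' : {0,1,2,3} → PMF({0,1,2,3}) such that the bind of M̃_{(ε,δ)}(b) with T'' equals M̃_{(ε,δ₀,δ₁)}(b), for both b = 0 and b = 1. -/

import Mathlib

open Finset

set_option maxHeartbeats 800000

lemma aux_construct (e δ0 δ1 δ : ℝ) (he : 1 < e)
    (h00 : 0 ≤ δ0) (h10 : 0 ≤ δ1)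
    (hd1 : δ < 1)
    (ha : e * (1 - δ0) ≥ 1 - δ1) (hb : e * (1 - δ1) ≥ 1 - δ0)
    (h0δ : δ0 ≤ δ) (h1δ : δ1 ≤ δ) :
    ∃ p q a b : ℝ, 0 ≤ p ∧ p ≤ 1 ∧ 0 ≤ q ∧ q ≤ 1 ∧
      0 ≤ a ∧ a ≤ δ - δ0 ∧ 0 ≤ b ∧ b ≤ δ - δ1 ∧
      (a + (1-δ)*e/(1+e)*p + (1-δ)/(1+e)*q
        = (e*e*(1-δ0) - e*(1-δ1))/(e*e-1)) ∧
      ((δ-δ0-a) + (1-δ)*e/(1+e)*(1-p) + (1-δ)/(1+e)*(1-q)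
        = (e*(1-δ1) - (1-δ0))/(e*e-1)) ∧
      (b + (1-δ)/(1+e)*p + (1-δ)*e/(1+e)*q
        = (e*(1-δ0) - (1-δ1))/(e*e-1)) ∧
      ((δ-δ1-b) + (1-δ)/(1+e)*(1-p) + (1-δ)*e/(1+e)*(1-q)
        = (e*e*(1-δ1) - e*(1-δ0))/(e*e-1)) := by
  have he0 : (0:ℝ) < e := by linarith
  have hd : (0:ℝ) < e*e - 1 := by nlinarith
  have hαpos : (0:ℝ) < 1 - δ := by linarith
  set α : ℝ := 1 - δ with hα_def
  set α0 : ℝ := 1 - δ0 with hα0_def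
  set α1 : ℝ := 1 - δ1 with hα1_def
  have hαα0 : α ≤ α0 := by simp [hα_def, hα0_def]; linarith
  have hαα1 : α ≤ α1 := by simp [hα_def, hα1_def]; linarith
  set G1 : ℝ := (e*α0 - α1)/(e*e-1) with hG1_def
  set F2 : ℝ := (e*α1 - α0)/(e*e-1) with hF2_def
  have hG1 : 0 ≤ G1 := div_nonneg (by linarith) hd.le
  have hF2 : 0 ≤ F2 := div_nonneg (by linarith) hd.le
  have hid1 : e*G1 + F2 = α0 := by
    rw [hG1_def, hF2_def, mul_div_assoc', ← add_div, div_eq_iff (ne_of_gt hd)]; ring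
  have hid2 : G1 + e*F2 = α1 := by
    rw [hG1_def, hF2_def, mul_div_assoc', ← add_div, div_eq_iff (ne_of_gt hd)]; ring
  set Y : ℝ := min G1 α with hY_def
  have hY0 : 0 ≤ Y := le_min hG1 hαpos.le
  have hYG1 : Y ≤ G1 := min_le_left _ _
  have hYα : Y ≤ α := min_le_right _ _
  have hYl : α ≤ Y + e*F2 := by
    rcases le_total G1 α with h | h
    · rw [hY_def, min_eq_left h]; linarith
    · rw [hY_def, min_eq_right h]; nlinarith
  set X : ℝ := max (α - F2) (max (Y/e) (e*Y - α*(e-1))) with hX_def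
  have hX1 : α - F2 ≤ X := le_max_left _ _
  have hX2 : Y/e ≤ X := (le_max_left _ _).trans (le_max_right _ _)
  have hX3 : e*Y - α*(e-1) ≤ X := (le_max_right _ _).trans (le_max_right _ _)
  have hXF1 : X ≤ e*G1 := by
    apply max_le
    · linarith
    apply max_le
    · rw [div_le_iff₀ he0]; nlinarith
    · nlinarith
  have hXup : e*X ≤ Y + α*(e-1) := by
    have hXle : X ≤ (Y + α*(e-1))/e := by
      apply max_le
      · rw [le_div_iff₀ he0]; nlinarith
      apply max_le
      · have h' : Y ≤ Y + α*(e-1) := by nlinarith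
        exact (div_le_div_iff_of_pos_right he0).mpr h'
      · rw [le_div_iff₀ he0]
        have key : (e*e-1)*Y ≤ (e*e-1)*α := mul_le_mul_of_nonneg_left hYα (by nlinarith)
        nlinarith [key]
    calc e*X ≤ e*((Y + α*(e-1))/e) := by
          exact mul_le_mul_of_nonneg_left hXle he0.le
      _ = Y + α*(e-1) := mul_div_cancel₀ _ (ne_of_gt he0)
  have hXeY : X ≤ e*Y := by
    apply max_le
    · rcases le_total G1 α with h | h
      · rw [hY_def, min_eq_left h]; linarith
      · rw [hY_def, min_eq_right h]; nlinarith
    apply max_le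
    · rw [div_le_iff₀ he0]; nlinarith
    · nlinarith
  have hYeX : Y ≤ e*X := by
    have := (div_le_iff₀ he0).mp hX2; linarith
  have hden : (0:ℝ) < α*(e-1) := mul_pos hαpos (by linarith)
  have hne2 : (1:ℝ)+e ≠ 0 := by linarith
  have hne3 : e*e-1 ≠ 0 := ne_of_gt hd
  have hne1 : α*(e-1) ≠ 0 := ne_of_gt hden
  have hnα : α ≠ 0 := ne_of_gt hαpos
  have hneE : e-1 ≠ 0 := by intro h; rw [show e = 1 by linarith] at he; linarith
  refine ⟨(e*X - Y)/(α*(e-1)), (e*Y - X)/(α*(e-1)), e*G1 - X, G1 - Y,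
    div_nonneg (by linarith) hden.le,
    by rw [div_le_one hden]; linarith,
    div_nonneg (by linarith) hden.le,
    by rw [div_le_one hden]; linarith,
    by linarith, by simp [hα_def, hα0_def] at hαα0 hX1 hid1 ⊢; linarith,
    by linarith, by simp [hα_def, hα1_def] at hαα1 hYl hid2 ⊢; linarith,
    ?_, ?_, ?_, ?_⟩ <;>
  · simp only [hG1_def, hF2_def, hα_def, hα0_def, hα1_def]
    have hq : e^2-1 ≠ 0 := by nlinarith
    field_simp [show (1:ℝ)-δ ≠ 0 by linarith, show e*e-1 ≠ 0 from hne3]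
    ring


/-- A probability mass function on a finite type: nonnegative and summing to 1. -/
def IsPMF {R : Type*} [Fintype R] (P : R → ℝ) : Prop :=
  (∀ r, 0 ≤ P r) ∧ ∑ r, P r = 1

/-- The Kairouz–Oh–Viswanath mechanism `M̃_{(ε,δ)}(b)` on `{0,1,2,3}`. -/
noncomputable def Mtilde (ε δ : ℝ) : Bool → Fin 4 → ℝ
  | false => ![δ, (1 - δ) * Real.exp ε / (1 + Real.exp ε), (1 - δ) / (1 + Real.exp ε), 0]
  | true  => ![0, (1 - δ) / (1 + Real.exp ε), (1 - δ) * Real.exp ε / (1 + Real.exp ε), δ]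

/-- The generalized mechanism `M̃_{(ε,δ₀,δ₁)}(b)` on `{0,1,2,3}`, with
`α₀ = 1 − δ₀` and `α₁ = 1 − δ₁`. -/
noncomputable def Mgen (ε δ0 δ1 : ℝ) : Bool → Fin 4 → ℝ
  | false => ![δ0,
      (Real.exp (2 * ε) * (1 - δ0) - Real.exp ε * (1 - δ1)) / (Real.exp (2 * ε) - 1),
      (Real.exp ε * (1 - δ1) - (1 - δ0)) / (Real.exp (2 * ε) - 1), 0]
  | true  => ![0,
      (Real.exp ε * (1 - δ0) - (1 - δ1)) / (Real.exp (2 * ε) - 1),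
      (Real.exp (2 * ε) * (1 - δ1) - Real.exp ε * (1 - δ0)) / (Real.exp (2 * ε) - 1), δ1]

/-- Lemma 3.5 of Murtagh–Vadhan: if `exp(ε)·(1−δ₀) ≥ 1−δ₁`, `exp(ε)·(1−δ₁) ≥ 1−δ₀`,
and `δ₀, δ₁ ≤ δ`, then `M̃_{(ε,δ₀,δ₁)}(b)` can be obtained from `M̃_{(ε,δ)}(b)` by
post-processing with a kernel `T'' : {0,1,2,3} → PMF({0,1,2,3})`, for both `b = 0, 1`. -/
theorem simulate_Mgen_from_Mtilde (ε δ0 δ1 δ : ℝ) (hε : 0 < ε)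
    (h0 : 0 ≤ δ0 ∧ δ0 < 1) (h1 : 0 ≤ δ1 ∧ δ1 < 1) (hδ : 0 ≤ δ ∧ δ < 1)
    (ha : Real.exp ε * (1 - δ0) ≥ 1 - δ1) (hb : Real.exp ε * (1 - δ1) ≥ 1 - δ0)
    (h0δ : δ0 ≤ δ) (h1δ : δ1 ≤ δ) :
    ∃ T'' : Fin 4 → Fin 4 → ℝ,
      (∀ x, IsPMF (T'' x)) ∧
      (∀ y, ∑ x, Mtilde ε δ false x * T'' x y = Mgen ε δ0 δ1 false y) ∧
      (∀ y, ∑ x, Mtilde ε δ true x * T'' x y = Mgen ε δ0 δ1 true y) := by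
  obtain ⟨hδ00, hδ01⟩ := h0
  obtain ⟨hδ10, hδ11⟩ := h1
  obtain ⟨hδd0, hδd1⟩ := hδ
  have he1 : 1 < Real.exp ε := by
    calc (1:ℝ) = Real.exp 0 := (Real.exp_zero).symm
    _ < Real.exp ε := Real.exp_lt_exp.mpr hε
  obtain ⟨p, q, a, b, hp0, hp1, hq0, hq1, ha0, ha1, hb0, hb1, eq1, eq2, eq3, eq4⟩ :=
    aux_construct (Real.exp ε) δ0 δ1 δ he1 hδ00 hδ10 hδd1 ha hb h0δ h1δ
  have h2e : Real.exp (2*ε) = Real.exp ε * Real.exp ε := by rw [two_mul, Real.exp_add]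
  have hδ0z : δ = 0 → δ0 = 0 := fun h => le_antisymm (h ▸ h0δ) hδ00
  have hδ1z : δ = 0 → δ1 = 0 := fun h => le_antisymm (h ▸ h1δ) hδ10
  have hA : δ * (1 - (δ-δ0)/δ) = δ0 := by
    by_cases h : δ = 0
    · simp [h, hδ0z h]
    · field_simp; ring
  have hB : δ * (a/δ) = a := by
    by_cases h : δ = 0
    · have : a = 0 := by have := hδ0z h; have := ha1; linarith
      simp [h, this]
    · field_simp
  have hC : δ * ((δ-δ0-a)/δ) = δ-δ0-a := by
    by_cases h : δ = 0
    · have h0 := hδ0z h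
      have : a = 0 := by linarith [ha1]
      simp [h, h0, this]
    · field_simp
  have hD : δ * (b/δ) = b := by
    by_cases h : δ = 0
    · have : b = 0 := by have := hδ1z h; have := hb1; linarith
      simp [h, this]
    · field_simp
  have hE : δ * ((δ-δ1-b)/δ) = δ-δ1-b := by
    by_cases h : δ = 0
    · have h1' := hδ1z h
      have : b = 0 := by linarith [hb1]
      simp [h, h1', this]
    · field_simp
  have hF : δ * (1 - (δ-δ1)/δ) = δ1 := by
    by_cases h : δ = 0
    · simp [h, hδ1z h]
    · field_simp; ring
  refine ⟨![![1 - (δ-δ0)/δ, a/δ, (δ-δ0-a)/δ, 0],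
            ![0, p, 1-p, 0],
            ![0, q, 1-q, 0],
            ![0, b/δ, (δ-δ1-b)/δ, 1 - (δ-δ1)/δ]], ?_, ?_, ?_⟩
  · intro x
    fin_cases x <;> constructor
    · intro r; fin_cases r <;> simp [Matrix.vecHead, Matrix.vecTail, Matrix.head_cons, Matrix.tail_cons, Matrix.cons_val_zero, Matrix.cons_val_one, Matrix.cons_val_two, Matrix.cons_val_three]
      · by_cases h : δ = 0
        · simp [h]
        · rw [div_le_one (lt_of_le_of_ne hδd0 (Ne.symm h))]; linarith
      · exact div_nonneg ha0 hδd0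
      · exact div_nonneg (by linarith) hδd0
    · simp [Fin.sum_univ_four, Matrix.vecHead, Matrix.vecTail]
      by_cases h : δ = 0
      · have h0 := hδ0z h
        have : a = 0 := by linarith [ha1]
        simp [h, h0, this]
      · field_simp; ring
    · intro r
      fin_cases r <;>
        simp [Matrix.vecHead, Matrix.vecTail, Matrix.head_cons, Matrix.tail_cons, Matrix.cons_val_zero, Matrix.cons_val_one, Matrix.cons_val_two, Matrix.cons_val_three] <;>
        try linarith
    · simp [Fin.sum_univ_four, Matrix.vecHead, Matrix.vecTail] <;> try ring
    · intro r
      fin_cases r <;>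
        simp [Matrix.vecHead, Matrix.vecTail, Matrix.head_cons, Matrix.tail_cons, Matrix.cons_val_zero, Matrix.cons_val_one, Matrix.cons_val_two, Matrix.cons_val_three] <;>
        try linarith
    · simp [Fin.sum_univ_four, Matrix.vecHead, Matrix.vecTail] <;> try ring
    · intro r; fin_cases r <;> simp [Matrix.vecHead, Matrix.vecTail, Matrix.head_cons, Matrix.tail_cons, Matrix.cons_val_zero, Matrix.cons_val_one, Matrix.cons_val_two, Matrix.cons_val_three]
      · exact div_nonneg hb0 hδd0
      · exact div_nonneg (by linarith) hδd0
      · by_cases h : δ = 0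
        · simp [h]
        · rw [div_le_one (lt_of_le_of_ne hδd0 (Ne.symm h))]; linarith
    · simp [Fin.sum_univ_four, Matrix.vecHead, Matrix.vecTail]
      by_cases h : δ = 0
      · have h1' := hδ1z h
        have : b = 0 := by linarith [hb1]
        simp [h, h1', this]
      · field_simp; ring
  · intro y
    fin_cases y <;> simp [Mtilde, Mgen, Fin.sum_univ_four, h2e, Matrix.vecHead, Matrix.vecTail]
    · linarith [hA]
    · linarith [hB, eq1]
    · linarith [hC, eq2]
  · intro y
    fin_cases y <;> simp [Mtilde, Mgen, Fin.sum_univ_four, h2e, Matrix.vecHead, Matrix.vecTail]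
    · linarith [hD, eq3]
    · linarith [hE, eq4]
    · linarith [hF]
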